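/- Let N/k be a finite Galois field extension, E an intermediate field with k ⊆ E ⊆ N, and H a subgroup of Gal(N/k). Then the following are equivalent: (i) the compositum E·N^H equals N and the extension E·N^H/N^H is Galois of degree [E:k] (where N^H is the fixed field of H); (ii) Gal(N/k) is the Zappa–Szép product of H and Gal(N/E), i.e., H ∩ Gal(N/E) = {1} and |H|·|Gal(N/E)| = |Gal(N/k)|. -/

import Mathlib

/-- Let `N/k` be a finite Galois extension, `E` an intermediate field, and `H` a
subgroup of `Gal(N/k)`, with fixed field `N^H`.  Then the compositum `E·N^H`
equals `N` with `E·N^H/N^H` Galois of degree `[E:k]` if and only if `Gal(N/k)` is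
the Zappa–Szép product of `H` and `Gal(N/E)`, i.e. `H ∩ Gal(N/E) = {1}` and
`|H|·|Gal(N/E)| = |Gal(N/k)|`. -/
theorem potentially_galois_iff_zs_product {k N : Type*} [Field k] [Field N]
    [Algebra k N] [FiniteDimensional k N] [IsGalois k N]
    (E : IntermediateField k N) (H : Subgroup (N ≃ₐ[k] N)) :
    (E ⊔ IntermediateField.fixedField H = ⊤ ∧
      IsGalois (IntermediateField.fixedField H) N ∧
      Module.finrank (IntermediateField.fixedField H) N = Module.finrank k E) ↔
    (H ⊓ E.fixingSubgroup = ⊥ ∧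
      Nat.card H * Nat.card E.fixingSubgroup = Nat.card (N ≃ₐ[k] N)) := by
  classical
  open IntermediateField Module in
  have hgal : IsGalois (fixedField H) N := IsGalois.tower_top_of_isGalois k _ N
  have hcardH : finrank (IntermediateField.fixedField H) N = Nat.card H := by
    rw [IntermediateField.finrank_fixedField_eq_card, Nat.card_eq_fintype_card]
  have hcardE : Nat.card E.fixingSubgroup = Module.finrank E N := by
    rw [IsGalois.card_fixingSubgroup_eq_finrank]
  have hcardG : Nat.card (N ≃ₐ[k] N) = Module.finrank k N := by
    rw [IsGalois.card_aut_eq_finrank]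
  have hmul : Module.finrank k E * Module.finrank E N = Module.finrank k N :=
    Module.finrank_mul_finrank k E N
  have hpos : 0 < Module.finrank E N := Module.finrank_pos
  -- the antitone property of `fixingSubgroup`
  have anti : ∀ {K L : IntermediateField k N}, K ≤ L →
      IntermediateField.fixingSubgroup L ≤ IntermediateField.fixingSubgroup K := by
    intro K L hKL
    exact (IntermediateField.le_iff_le _ _).mp
      (hKL.trans (le_of_eq (IsGalois.fixedField_fixingSubgroup L).symm))
  have hdeg : (Module.finrank (IntermediateField.fixedField H) N = Module.finrank k E) ↔
      (Nat.card H * Nat.card E.fixingSubgroup = Nat.card (N ≃ₐ[k] N)) := by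
    rw [hcardH.symm, hcardE, hcardG, ← hmul]
    constructor
    · intro h; rw [h]
    · intro h; exact Nat.eq_of_mul_eq_mul_right hpos h
  have hinj : Function.Injective
      (IntermediateField.fixingSubgroup : IntermediateField k N → Subgroup (N ≃ₐ[k] N)) := by
    intro K L h
    rw [← IsGalois.fixedField_fixingSubgroup K, ← IsGalois.fixedField_fixingSubgroup L, h]
  have hsup : (E ⊔ IntermediateField.fixedField H = ⊤) ↔
      (H ⊓ E.fixingSubgroup = ⊥) := by
    constructor
    · intro hEF
      have h1 : H ⊓ E.fixingSubgroup ≤ E.fixingSubgroup := inf_le_right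
      have h2 : H ⊓ E.fixingSubgroup ≤
          IntermediateField.fixingSubgroup (IntermediateField.fixedField H) :=
        inf_le_left.trans (le_of_eq (IntermediateField.fixingSubgroup_fixedField H).symm)
      have hE : E ≤ IntermediateField.fixedField (H ⊓ E.fixingSubgroup) :=
        (IntermediateField.le_iff_le _ _).mpr h1
      have hF : IntermediateField.fixedField H ≤
          IntermediateField.fixedField (H ⊓ E.fixingSubgroup) :=
        (IntermediateField.le_iff_le _ _).mpr h2
      have htop : IntermediateField.fixedField (H ⊓ E.fixingSubgroup) = ⊤ :=
        top_le_iff.mp (hEF ▸ sup_le hE hF)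
      calc H ⊓ E.fixingSubgroup
          = IntermediateField.fixingSubgroup
              (IntermediateField.fixedField (H ⊓ E.fixingSubgroup)) :=
            (IntermediateField.fixingSubgroup_fixedField _).symm
        _ = IntermediateField.fixingSubgroup (⊤ : IntermediateField k N) := by rw [htop]
        _ = ⊥ := IntermediateField.fixingSubgroup_top
    · intro hinf
      have h1 : IntermediateField.fixingSubgroup (E ⊔ IntermediateField.fixedField H) ≤
          E.fixingSubgroup := anti le_sup_left
      have h2 : IntermediateField.fixingSubgroup (E ⊔ IntermediateField.fixedField H) ≤ H :=
        (anti le_sup_right).trans (le_of_eq (IntermediateField.fixingSubgroup_fixedField H))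
      have hbot : IntermediateField.fixingSubgroup (E ⊔ IntermediateField.fixedField H) = ⊥ :=
        le_antisymm (hinf ▸ le_inf h2 h1) bot_le
      apply hinj
      rw [hbot, IntermediateField.fixingSubgroup_top]
  constructor
  · rintro ⟨h1, -, h3⟩
    exact ⟨hsup.mp h1, hdeg.mp h3⟩
  · rintro ⟨h1, h2⟩
    exact ⟨hsup.mpr h1, hgal, hdeg.mpr h2⟩
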